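/- If S₁ = A₁ \ (B₁ ∪ … ∪ B_r) and S₂ = A₂ \ (C₁ ∪ … ∪ C_s) are two swiss cheeses in a directed family with S₁ ∩ S₂ ≠ ∅, then A₁ ⊆ A₂ or A₂ ⊆ A₁, and S₁ ∪ S₂ is again a swiss cheese with wheel the larger of A₁, A₂. -/

import Mathlib

variable {U : Type*}

/-- A directed family: nonempty sets, any two nested or disjoint. -/
def DirFam (𝓑 : Set (Set U)) : Prop :=
  (∀ B ∈ 𝓑, B.Nonempty) ∧
    ∀ B₀ ∈ 𝓑, ∀ B₁ ∈ 𝓑, B₀ ⊆ B₁ ∨ B₁ ⊆ B₀ ∨ B₀ ∩ B₁ = ∅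

/-- Key step: a point of the big wheel outside both cheeses and lies in some hole
that is disjoint from the union of the two cheeses. -/
lemma key (𝓑 : Set (Set U)) (h : DirFam 𝓑)
    (A₁ A₂ : Set U) (hA₂ : A₂ ∈ 𝓑)
    (H₁ H₂ : Set (Set U)) (hs₁ : H₁ ⊆ 𝓑) (hs₂ : H₂ ⊆ 𝓑)
    (hne : ((A₁ \ ⋃₀ H₁) ∩ (A₂ \ ⋃₀ H₂)).Nonempty)
    (x : U) (hx : x ∈ A₁) (hx1 : x ∉ A₁ \ ⋃₀ H₁) (hx2 : x ∉ A₂ \ ⋃₀ H₂) :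
    ∃ D ∈ H₁ ∪ H₂, x ∈ D ∧ D ∩ ((A₁ \ ⋃₀ H₁) ∪ (A₂ \ ⋃₀ H₂)) = ∅ := by
  obtain ⟨z, hz1, hz2⟩ := hne
  have hxB : x ∈ ⋃₀ H₁ := by
    by_contra hc; exact hx1 ⟨hx, hc⟩
  obtain ⟨B, hB, hxB⟩ := hxB
  have hBS₁ : B ∩ (A₁ \ ⋃₀ H₁) = ∅ := by
    ext y; simp only [Set.mem_inter_iff, Set.mem_diff, Set.mem_empty_iff_false, iff_false]
    rintro ⟨hyB, _, hy⟩; exact hy ⟨B, hB, hyB⟩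
  by_cases hBS₂ : B ∩ (A₂ \ ⋃₀ H₂) = ∅
  · exact ⟨B, Or.inl hB, hxB, by rw [Set.inter_union_distrib_left, hBS₁, hBS₂, Set.union_empty]⟩
  · obtain ⟨y, hyB, hyS₂⟩ := Set.nonempty_iff_ne_empty.2 hBS₂
    have hBA₂ : B ⊆ A₂ := by
      rcases h.2 B (hs₁ hB) A₂ hA₂ with h' | h' | h'
      · exact h'
      · exact absurd ⟨B, hB, h' hz2.1⟩ hz1.2
      · exact absurd (Set.eq_empty_iff_forall_notMem.1 h' y ⟨hyB, hyS₂.1⟩) not_false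
    have hxC : x ∈ ⋃₀ H₂ := by
      by_contra hc; exact hx2 ⟨hBA₂ hxB, hc⟩
    obtain ⟨C, hC, hxC⟩ := hxC
    have hCB : C ⊆ B := by
      rcases h.2 B (hs₁ hB) C (hs₂ hC) with h' | h' | h'
      · exact absurd ⟨C, hC, h' hyB⟩ hyS₂.2
      · exact h'
      · exact absurd (Set.eq_empty_iff_forall_notMem.1 h' x ⟨hxB, hxC⟩) not_false
    refine ⟨C, Or.inr hC, hxC, ?_⟩
    have hCS₂ : C ∩ (A₂ \ ⋃₀ H₂) = ∅ := by
      ext w; simp only [Set.mem_inter_iff, Set.mem_diff, Set.mem_empty_iff_false, iff_false]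
      rintro ⟨hwC, _, hw⟩; exact hw ⟨C, hC, hwC⟩
    have hCS₁ : C ∩ (A₁ \ ⋃₀ H₁) = ∅ :=
      Set.eq_empty_of_subset_empty (hBS₁ ▸ Set.inter_subset_inter_left _ hCB)
    rw [Set.inter_union_distrib_left, hCS₁, hCS₂, Set.union_empty]

/-- Two intersecting swiss cheeses have nested wheels, and their union is a swiss
cheese whose wheel is the larger of the two wheels. -/
theorem stmt5 (𝓑 : Set (Set U)) (h : DirFam 𝓑)
    (A₁ A₂ : Set U) (hA₁ : A₁ ∈ 𝓑) (hA₂ : A₂ ∈ 𝓑)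
    (H₁ H₂ : Set (Set U)) (hf₁ : H₁.Finite) (hf₂ : H₂.Finite)
    (hs₁ : H₁ ⊆ 𝓑) (hs₂ : H₂ ⊆ 𝓑)
    (hp₁ : ∀ B ∈ H₁, B ⊂ A₁) (hp₂ : ∀ B ∈ H₂, B ⊂ A₂)
    (hd₁ : ∀ B ∈ H₁, ∀ C ∈ H₁, B ≠ C → B ∩ C = ∅)
    (hd₂ : ∀ B ∈ H₂, ∀ C ∈ H₂, B ≠ C → B ∩ C = ∅)
    (hne : ((A₁ \ ⋃₀ H₁) ∩ (A₂ \ ⋃₀ H₂)).Nonempty) :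
    (A₁ ⊆ A₂ ∨ A₂ ⊆ A₁) ∧
      ∃ H : Set (Set U), H.Finite ∧ H ⊆ 𝓑 ∧ (∀ B ∈ H, B ⊂ A₁ ∪ A₂) ∧
        (A₁ \ ⋃₀ H₁) ∪ (A₂ \ ⋃₀ H₂) = (A₁ ∪ A₂) \ ⋃₀ H := by
  obtain ⟨z, hz1, hz2⟩ := hne
  constructor
  · rcases h.2 A₁ hA₁ A₂ hA₂ with h' | h' | h'
    · exact Or.inl h'
    · exact Or.inr h'
    · exact absurd (Set.eq_empty_iff_forall_notMem.1 h' z ⟨hz1.1, hz2.1⟩) not_false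
  · set S : Set U := (A₁ \ ⋃₀ H₁) ∪ (A₂ \ ⋃₀ H₂) with hS
    refine ⟨{D ∈ H₁ ∪ H₂ | D ∩ S = ∅}, (hf₁.union hf₂).subset (Set.sep_subset _ _), ?_, ?_, ?_⟩
    · rintro D ⟨hD | hD, -⟩
      · exact hs₁ hD
      · exact hs₂ hD
    · rintro D ⟨hD, hDS⟩
      refine Set.ssubset_iff_of_subset ?_ |>.2 ⟨z, Or.inl hz1.1, fun hzD => ?_⟩
      · rcases hD with hD | hD
        · exact (hp₁ D hD).1.trans Set.subset_union_left
        · exact (hp₂ D hD).1.trans Set.subset_union_right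
      · exact Set.eq_empty_iff_forall_notMem.1 hDS z ⟨hzD, Or.inl hz1⟩
    · ext x
      simp only [Set.mem_union, Set.mem_diff, Set.mem_sep_iff, Set.mem_sUnion]
      constructor
      · rintro hx
        refine ⟨?_, ?_⟩
        · rcases hx with hx | hx
          · exact Or.inl hx.1
          · exact Or.inr hx.1
        · rintro ⟨D, ⟨_, hDS⟩, hxD⟩
          exact Set.eq_empty_iff_forall_notMem.1 hDS x ⟨hxD, hx⟩
      · rintro ⟨hx, hxH⟩
        by_contra hxS
        have hx1 : x ∉ A₁ \ ⋃₀ H₁ := fun hc => hxS (Or.inl hc)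
        have hx2 : x ∉ A₂ \ ⋃₀ H₂ := fun hc => hxS (Or.inr hc)
        rcases hx with hx | hx
        · obtain ⟨D, hD, hxD, hDS⟩ :=
            key 𝓑 h A₁ A₂ hA₂ H₁ H₂ hs₁ hs₂ ⟨z, hz1, hz2⟩ x hx hx1 hx2
          exact hxH ⟨D, ⟨hD, hDS⟩, hxD⟩
        · obtain ⟨D, hD, hxD, hDS⟩ :=
            key 𝓑 h A₂ A₁ hA₁ H₂ H₁ hs₂ hs₁ ⟨z, hz2, hz1⟩ x hx hx2 hx1
          refine hxH ⟨D, ⟨hD.symm, ?_⟩, hxD⟩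
          rw [hS, Set.union_comm]; exact hDS
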